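/- Let c : S^{d-1} → (a, a^{-1}) for some a ∈ (0,1), and define the Wulff shape W(c) = ⋂_{e ∈ S^{d-1}} {x ∈ ℝ^d : x·e ≤ c(e)}. Then for every ε ∈ (0,1) there exists a finite set R ⊂ S^{d-1} such that ⋂_{r ∈ R} {x : x·r ≤ c(r)} ⊆ (1+ε) W(c). -/
import Mathlib


open scoped Pointwise RealInnerProductSpace

/-- Outer approximation of Wulff shapes by finitely many half-spaces: if
`c : S^{d-1} → (a, a⁻¹)` with `a ∈ (0,1)` and `W(c)` is the associated Wulff shape,
then for every `ε ∈ (0,1)` there is a finite set `R` of unit vectors with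
`⋂_{r ∈ R} {x : x·r ≤ c r} ⊆ (1+ε) W(c)`. -/
theorem wulff_outer_approx (d : ℕ) (a : ℝ) (ha : 0 < a) (ha1 : a < 1)
    (c : Metric.sphere (0 : EuclideanSpace ℝ (Fin d)) 1 → ℝ)
    (hc : ∀ e, a < c e ∧ c e < a⁻¹)
    (ε : ℝ) (hε : 0 < ε) (hε1 : ε < 1) :
    ∃ R : Finset (Metric.sphere (0 : EuclideanSpace ℝ (Fin d)) 1),
      {x : EuclideanSpace ℝ (Fin d) | ∀ r ∈ R, ⟪x, (r : EuclideanSpace ℝ (Fin d))⟫ ≤ c r}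
        ⊆ (1 + ε) •
          {x : EuclideanSpace ℝ (Fin d) |
            ∀ e : Metric.sphere (0 : EuclideanSpace ℝ (Fin d)) 1,
              ⟪x, (e : EuclideanSpace ℝ (Fin d))⟫ ≤ c e} := by
  classical
  set E := EuclideanSpace ℝ (Fin d) with hE
  set W : Set E := {x | ∀ e : Metric.sphere (0 : E) 1, ⟪x, (e : E)⟫ ≤ c e} with hW
  have hε' : (0:ℝ) < 1 + ε := by linarith
  have hnorm : ∀ e : Metric.sphere (0 : E) 1, ‖(e : E)‖ = 1 :=
    fun e => mem_sphere_zero_iff_norm.mp e.2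
  -- the open neighborhood O of W, contained in (1+ε) • W
  set O : Set E := ⋃ x ∈ W, Metric.ball x (ε * a) with hO
  have hOopen : IsOpen O := isOpen_biUnion fun _ _ => Metric.isOpen_ball
  have hOsub : O ⊆ (1 + ε) • W := by
    intro y hy
    simp only [hO, Set.mem_iUnion, exists_prop] at hy
    obtain ⟨x, hxW, hxy⟩ := hy
    refine ⟨(1 + ε)⁻¹ • y, ?_, ?_⟩
    · intro e
      have h1 : ⟪(1 + ε)⁻¹ • y, (e : E)⟫ = (1 + ε)⁻¹ * ⟪y, (e : E)⟫ :=
        real_inner_smul_left _ _ _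
      have h2 : ⟪y - x, (e : E)⟫ ≤ ‖y - x‖ * ‖(e : E)‖ := real_inner_le_norm _ _
      have h3 : ‖y - x‖ < ε * a := by
        rw [← dist_eq_norm]; exact Metric.mem_ball.mp hxy
      have h4 : ⟪y, (e : E)⟫ ≤ c e + ε * a := by
        have hxe := hxW e
        have hadd : x + (y - x) = y := by abel
        have hsum : ⟪y, (e : E)⟫ = ⟪x, (e : E)⟫ + ⟪y - x, (e : E)⟫ := by
          rw [← inner_add_left, hadd]
        rw [hsum]
        have h5 : ⟪y - x, (e : E)⟫ ≤ ε * a := by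
          calc ⟪y - x, (e : E)⟫ ≤ ‖y - x‖ * ‖(e : E)‖ := h2
            _ = ‖y - x‖ := by rw [hnorm e, mul_one]
            _ ≤ ε * a := le_of_lt h3
        linarith
      rw [h1]
      have hca : a < c e := (hc e).1
      have key : ⟪y, (e : E)⟫ ≤ (1 + ε) * c e := by
        calc ⟪y, (e : E)⟫ ≤ c e + ε * a := h4
          _ ≤ c e + ε * c e := by nlinarith
          _ = (1 + ε) * c e := by ring
      calc (1 + ε)⁻¹ * ⟪y, (e : E)⟫ ≤ (1 + ε)⁻¹ * ((1 + ε) * c e) :=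
            mul_le_mul_of_nonneg_left key (by positivity)
        _ = c e := by field_simp
    · simp [smul_smul, mul_inv_cancel₀ (ne_of_gt hε')]
  -- half-space complements
  set U : Metric.sphere (0 : E) 1 → Set E := fun e => {y | c e < ⟪y, (e : E)⟫} with hU
  have hUopen : ∀ e, IsOpen (U e) := fun e =>
    isOpen_lt continuous_const (continuous_id.inner continuous_const)
  set V : Option (Metric.sphere (0 : E) 1) → Set E := fun i => Option.elim i O U with hV
  have hVopen : ∀ i, IsOpen (V i) := by
    rintro (_ | e)
    · exact hOopen
    · exact hUopen e
  set M : ℝ := Real.sqrt d * a⁻¹ with hM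
  have hMnn : 0 ≤ M := by positivity
  have hcover : Metric.closedBall (0 : E) M ⊆ ⋃ i, V i := by
    intro x _
    by_cases hx : x ∈ W
    · exact Set.mem_iUnion.mpr ⟨none, Set.mem_biUnion hx (Metric.mem_ball_self (by positivity))⟩
    · simp only [hW, Set.mem_setOf_eq, not_forall, not_le] at hx
      obtain ⟨e, he⟩ := hx
      exact Set.mem_iUnion.mpr ⟨some e, he⟩
  obtain ⟨t, ht⟩ := (isCompact_closedBall (0 : E) M).elim_finite_subcover V hVopen hcover
  -- basis direction unit vectors
  have hbmem : ∀ (i : Fin d) (s : ℝ), s = 1 ∨ s = -1 →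
      (EuclideanSpace.single i s : E) ∈ Metric.sphere (0 : E) 1 := by
    intro i s hs
    rw [mem_sphere_zero_iff_norm, EuclideanSpace.norm_single]
    rcases hs with h | h <;> simp [h]
  set bp : Fin d → Metric.sphere (0 : E) 1 :=
    fun i => ⟨EuclideanSpace.single i (1:ℝ), hbmem i 1 (Or.inl rfl)⟩ with hbp
  set bn : Fin d → Metric.sphere (0 : E) 1 :=
    fun i => ⟨EuclideanSpace.single i (-1:ℝ), hbmem i (-1) (Or.inr rfl)⟩ with hbn
  refine ⟨t.eraseNone ∪ Finset.image bp Finset.univ ∪ Finset.image bn Finset.univ, ?_⟩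
  intro x hx
  simp only [Set.mem_setOf_eq] at hx
  -- coordinate bounds
  have hcoord : ∀ i : Fin d, |x i| ≤ a⁻¹ := by
    intro i
    have hp : ⟪x, (bp i : E)⟫ ≤ c (bp i) :=
      hx (bp i) (by simp [Finset.mem_union])
    have hn : ⟪x, (bn i : E)⟫ ≤ c (bn i) :=
      hx (bn i) (by simp [Finset.mem_union])
    have hip : ⟪x, (bp i : E)⟫ = x i := by
      simp [hbp, EuclideanSpace.inner_single_right]
    have hin : ⟪x, (bn i : E)⟫ = -(x i) := by
      simp [hbn, EuclideanSpace.inner_single_right]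
    rw [hip] at hp; rw [hin] at hn
    have h1 := (hc (bp i)).2
    have h2 := (hc (bn i)).2
    rw [abs_le]; constructor <;> linarith
  have hxball : x ∈ Metric.closedBall (0 : E) M := by
    rw [Metric.mem_closedBall, dist_zero_right]
    rw [show ‖x‖ = Real.sqrt (∑ i : Fin d, ‖x i‖ ^ 2) from EuclideanSpace.norm_eq x]
    have hsum : ∑ i : Fin d, ‖x i‖ ^ 2 ≤ (d : ℝ) * (a⁻¹)^2 := by
      calc ∑ i : Fin d, ‖x i‖ ^ 2 ≤ ∑ _i : Fin d, (a⁻¹)^2 := by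
            apply Finset.sum_le_sum
            intro i _
            have := hcoord i
            rw [Real.norm_eq_abs]
            nlinarith [abs_nonneg (x i)]
        _ = (d : ℝ) * (a⁻¹)^2 := by simp [mul_comm]
    calc Real.sqrt (∑ i : Fin d, ‖x i‖ ^ 2) ≤ Real.sqrt ((d : ℝ) * (a⁻¹)^2) :=
          Real.sqrt_le_sqrt hsum
      _ = M := by
          rw [hM, Real.sqrt_mul (Nat.cast_nonneg d), Real.sqrt_sq (by positivity)]
  have hxcov := ht hxball
  simp only [Set.mem_iUnion, exists_prop] at hxcov
  obtain ⟨i, hit, hxi⟩ := hxcov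
  rcases i with _ | r
  · exact hOsub hxi
  · exfalso
    have hr : r ∈ t.eraseNone ∪ Finset.image bp Finset.univ ∪ Finset.image bn Finset.univ := by
      simp [Finset.mem_union, Finset.mem_eraseNone, hit]
    have hle := hx r hr
    have hlt : c r < ⟪x, (r : E)⟫ := hxi
    exact absurd hle (not_le.mpr hlt)
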